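/- Let (X, d) be a geodesic metric space that is δ-hyperbolic for some δ ≥ 0. For every k ≥ 1 and R ≥ 0 there is a constant N(k,R) such that: if p : [a,b] → X and q : [a',b'] → X are k-quasigeodesics with d(p(a), q(a')) ≤ R and d(p(b), q(b')) ≤ R, then the image of p is contained in the closed N(k,R)-neighborhood of the image of q, and the image of q is contained in the closed N(k,R)-neighborhood of the image of p. Moreover, for fixed δ, N(k,R) can be chosen bounded above by a polynomial function of k and R. (Corollary 2.2.6.) -/

import Mathlib

open Metric Set

/-- A geodesic from `x` to `y`: an isometric parametrization of `[0, dist x y]`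
with the correct endpoints. -/
def IsGeodesicSegment {X : Type*} [MetricSpace X] (x y : X) (γ : ℝ → X) : Prop :=
  γ 0 = x ∧ γ (dist x y) = y ∧
    ∀ s ∈ Set.Icc (0 : ℝ) (dist x y), ∀ t ∈ Set.Icc (0 : ℝ) (dist x y),
      dist (γ s) (γ t) = |s - t|

/-- A geodesic metric space: any two points are joined by a geodesic. -/
def GeodesicSpace (X : Type*) [MetricSpace X] : Prop :=
  ∀ x y : X, ∃ γ : ℝ → X, IsGeodesicSegment x y γ

/-- `δ`-hyperbolicity via slim triangles: each side of any geodesic triangle is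
contained in the closed `δ`-neighborhood of the union of the other two sides. -/
def SlimTriangles {X : Type*} [MetricSpace X] (δ : ℝ) : Prop :=
  ∀ x y z : X, ∀ γ₁ γ₂ γ₃ : ℝ → X,
    IsGeodesicSegment x y γ₁ → IsGeodesicSegment y z γ₂ → IsGeodesicSegment x z γ₃ →
      γ₁ '' Set.Icc 0 (dist x y) ⊆
        Metric.cthickening δ (γ₂ '' Set.Icc 0 (dist y z) ∪ γ₃ '' Set.Icc 0 (dist x z)) ∧
      γ₂ '' Set.Icc 0 (dist y z) ⊆
        Metric.cthickening δ (γ₁ '' Set.Icc 0 (dist x y) ∪ γ₃ '' Set.Icc 0 (dist x z)) ∧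
      γ₃ '' Set.Icc 0 (dist x z) ⊆
        Metric.cthickening δ (γ₁ '' Set.Icc 0 (dist x y) ∪ γ₂ '' Set.Icc 0 (dist y z))

/-- A `k`-quasigeodesic defined on `[a,b]`. -/
def IsQuasigeodesic {X : Type*} [MetricSpace X] (k a b : ℝ) (p : ℝ → X) : Prop :=
  ∀ s ∈ Set.Icc a b, ∀ t ∈ Set.Icc a b,
    (1 / k) * |s - t| - k ≤ dist (p s) (p t) ∧ dist (p s) (p t) ≤ k * |s - t| + k

set_option maxHeartbeats 1000000
section AuxMorse
lemma clog_le_logb (N : ℕ) : (Nat.clog 2 N : ℝ) ≤ Real.logb 2 (N + 1) + 1 := by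
  have hlogb0 : 0 ≤ Real.logb 2 (N + 1) :=
    Real.logb_nonneg (by norm_num) (by push_cast; linarith [Nat.cast_nonneg (α := ℝ) N])
  rcases le_or_gt N 1 with h | h
  · interval_cases N
    · rw [Nat.clog_zero_right]; push_cast at hlogb0 ⊢; linarith
    · rw [Nat.clog_one_right]; push_cast at hlogb0 ⊢; linarith
  · set m := ⌈Real.logb 2 (N : ℝ)⌉₊ with hm
    have hN0 : (0:ℝ) < N := by exact_mod_cast Nat.lt_of_lt_of_le Nat.zero_lt_one h.le
    have hlogbN : 0 ≤ Real.logb 2 (N : ℝ) :=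
      Real.logb_nonneg (by norm_num) (by exact_mod_cast h.le)
    have h1 : (N : ℝ) ≤ 2 ^ (m : ℝ) := by
      have := Real.rpow_logb (by norm_num : (0:ℝ) < 2) (by norm_num) hN0
      calc (N:ℝ) = 2 ^ Real.logb 2 (N:ℝ) := this.symm
        _ ≤ 2 ^ (m:ℝ) := Real.rpow_le_rpow_of_exponent_le (by norm_num) (Nat.le_ceil _)
    have h2 : N ≤ 2 ^ m := by
      have h1' : (N : ℝ) ≤ ((2:ℝ) ^ m) := by
        rwa [← Real.rpow_natCast 2 m]
      exact_mod_cast h1'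
    have h3 : Nat.clog 2 N ≤ m := (Nat.clog_le_iff_le_pow (by norm_num)).2 h2
    have h4 : (m : ℝ) ≤ Real.logb 2 (N:ℝ) + 1 := by
      have := Nat.ceil_lt_add_one hlogbN
      linarith
    have h5 : Real.logb 2 (N:ℝ) ≤ Real.logb 2 ((N:ℝ) + 1) := by
      exact Real.logb_le_logb_of_le (by norm_num) hN0 (by linarith)
    calc (Nat.clog 2 N : ℝ) ≤ (m : ℝ) := by exact_mod_cast h3
      _ ≤ Real.logb 2 (N:ℝ) + 1 := h4
      _ ≤ Real.logb 2 ((N:ℝ) + 1) + 1 := by linarith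

variable {X : Type*} [MetricSpace X]

/-- membership in cthickening via infDist -/
lemma mem_cth_iff {s : Set X} (hs : s.Nonempty) {r : ℝ} (hr : 0 ≤ r) {x : X} :
    x ∈ cthickening r s ↔ infDist x s ≤ r := by
  rw [Metric.mem_cthickening_iff, Metric.infDist,
    ENNReal.le_ofReal_iff_toReal_le (infEdist_ne_top hs) hr]

/-- chaining of infDist bounds -/
lemma infDist_chain {x : X} {S T : Set X} {r r' : ℝ} (hS : S.Nonempty)
    (h1 : infDist x S ≤ r) (h2 : ∀ y ∈ S, infDist y T ≤ r') :
    infDist x T ≤ r + r' := by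
  refine le_of_forall_pos_le_add fun ε hε => ?_
  have hlt : infDist x S < r + ε := lt_of_le_of_lt h1 (by linarith)
  obtain ⟨y, hy, hxy⟩ := (infDist_lt_iff hS).1 hlt
  have h3 : infDist x T ≤ infDist y T + dist x y := infDist_le_infDist_add_dist
  have := h2 y hy
  linarith [hxy.le]

lemma geod_image_nonempty {x y : X} {γ : ℝ → X} (h : IsGeodesicSegment x y γ) :
    (γ '' Set.Icc 0 (dist x y)).Nonempty :=
  ⟨x, ⟨0, ⟨le_refl _, dist_nonneg⟩, h.1⟩⟩

lemma geod_mem_left {x y : X} {γ : ℝ → X} (h : IsGeodesicSegment x y γ) :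
    x ∈ γ '' Set.Icc 0 (dist x y) := ⟨0, ⟨le_refl _, dist_nonneg⟩, h.1⟩

lemma geod_mem_right {x y : X} {γ : ℝ → X} (h : IsGeodesicSegment x y γ) :
    y ∈ γ '' Set.Icc 0 (dist x y) := ⟨dist x y, ⟨dist_nonneg, le_refl _⟩, h.2.1⟩

/-- every point of a geodesic is within `dist x y` of both endpoints -/
lemma geod_pt_close {x y : X} {γ : ℝ → X} (h : IsGeodesicSegment x y γ)
    {w : X} (hw : w ∈ γ '' Set.Icc 0 (dist x y)) :
    dist w x ≤ dist x y ∧ dist w y ≤ dist x y ∧ dist w x + dist w y = dist x y := by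
  obtain ⟨t, ht, rfl⟩ := hw
  have h1 : dist (γ t) (γ 0) = |t - 0| := h.2.2 t ht 0 ⟨le_refl _, dist_nonneg⟩
  have h2 : dist (γ t) (γ (dist x y)) = |t - dist x y| :=
    h.2.2 t ht (dist x y) ⟨dist_nonneg, le_refl _⟩
  rw [h.1] at h1; rw [h.2.1] at h2
  rw [h1, h2]
  rw [abs_of_nonneg (by linarith [ht.1] : (0:ℝ) ≤ t - 0), abs_of_nonpos (by linarith [ht.2])]
  constructor
  · linarith [ht.1, ht.2]
  constructor
  · linarith [ht.1, ht.2]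
  · ring

/-- reversal of a geodesic -/
lemma geod_reverse {x y : X} {γ : ℝ → X} (h : IsGeodesicSegment x y γ) :
    IsGeodesicSegment y x (fun t => γ (dist x y - t)) ∧
      (fun t => γ (dist x y - t)) '' Set.Icc 0 (dist y x) = γ '' Set.Icc 0 (dist x y) := by
  have hd : dist y x = dist x y := dist_comm y x
  constructor
  · refine ⟨by simpa using h.2.1, by rw [hd]; simpa using h.1, fun s hs t ht => ?_⟩
    rw [hd] at hs ht
    have := h.2.2 (dist x y - s) ⟨by linarith [hs.2], by linarith [hs.1]⟩
      (dist x y - t) ⟨by linarith [ht.2], by linarith [ht.1]⟩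
    rw [this]
    rw [abs_sub_comm]; congr 1; ring
  · rw [hd]
    ext w
    constructor
    · rintro ⟨t, ht, rfl⟩
      exact ⟨dist x y - t, ⟨by linarith [ht.2], by linarith [ht.1]⟩, rfl⟩
    · rintro ⟨t, ht, rfl⟩
      exact ⟨dist x y - t, ⟨by linarith [ht.2], by linarith [ht.1]⟩, by simp⟩

/-- sub-geodesic -/
lemma geod_sub {x y : X} {γ : ℝ → X} (h : IsGeodesicSegment x y γ)
    {u v : ℝ} (hu : 0 ≤ u) (huv : u ≤ v) (hv : v ≤ dist x y) :
    IsGeodesicSegment (γ u) (γ v) (fun t => γ (u + t)) ∧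
      (fun t => γ (u + t)) '' Set.Icc 0 (dist (γ u) (γ v)) = γ '' Set.Icc u v := by
  have hduv : dist (γ u) (γ v) = v - u := by
    rw [h.2.2 u ⟨hu, le_trans huv hv⟩ v ⟨le_trans hu huv, hv⟩, abs_of_nonpos (by linarith)]
    ring
  constructor
  · refine ⟨by simp, ?_, fun s hs t ht => ?_⟩
    · rw [hduv]; ring_nf
    · rw [hduv] at hs ht
      rw [h.2.2 (u + s) ⟨by linarith [hs.1], by linarith [hs.2]⟩
        (u + t) ⟨by linarith [ht.1], by linarith [ht.2]⟩]
      congr 1; ring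
  · rw [hduv]
    ext w
    constructor
    · rintro ⟨t, ht, rfl⟩
      exact ⟨u + t, ⟨by linarith [ht.1], by linarith [ht.2]⟩, rfl⟩
    · rintro ⟨t, ht, rfl⟩
      exact ⟨t - u, ⟨by linarith [ht.1], by linarith [ht.2]⟩, by simp⟩

lemma chain_lemma (hgeo : GeodesicSpace X) (δ : ℝ) (hδ : 0 ≤ δ)
    (hslim : SlimTriangles (X := X) δ) :
    ∀ n : ℕ, ∀ c : ℝ, 0 ≤ c → ∀ z : ℕ → X, ∀ N : ℕ, N ≤ 2 ^ n →
    (∀ i, i < N → dist (z i) (z (i + 1)) ≤ c) →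
    ∀ γ, IsGeodesicSegment (z 0) (z N) γ →
    ∀ w ∈ γ '' Set.Icc 0 (dist (z 0) (z N)), infDist w (Set.range z) ≤ c + n * δ := by
  intro n
  induction n with
  | zero =>
    intro c hc z N hN hgap γ hγ w hw
    simp only [pow_zero] at hN
    have hd : dist (z 0) (z N) ≤ c := by
      interval_cases N
      · simp [hc]
      · exact hgap 0 (by norm_num)
    have := (geod_pt_close hγ hw).1
    calc infDist w (Set.range z) ≤ dist w (z 0) := infDist_le_dist_of_mem (mem_range_self 0)
      _ ≤ c := by linarith
      _ ≤ c + (0:ℕ) * δ := by simp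
  | succ n ih =>
    intro c hc z N hN hgap γ hγ w hw
    by_cases hN' : N ≤ 2 ^ n
    · have := ih c hc z N hN' hgap γ hγ w hw
      have : (n : ℝ) * δ ≤ (n + 1 : ℕ) * δ := by
        push_cast; nlinarith
      linarith [ih c hc z N hN' hgap γ hγ w hw]
    · push_neg at hN'
      set M := 2 ^ n with hM
      have hMN : M ≤ N := hN'.le
      have hM1 : 1 ≤ M := Nat.one_le_two_pow
      obtain ⟨γ₁, hγ₁⟩ := hgeo (z 0) (z M)
      obtain ⟨γ₂, hγ₂⟩ := hgeo (z M) (z N)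
      have hslim3 := (hslim (z 0) (z M) (z N) γ₁ γ₂ γ hγ₁ hγ₂ hγ).2.2
      have hwm := hslim3 hw
      have hne : (γ₁ '' Set.Icc 0 (dist (z 0) (z M)) ∪
          γ₂ '' Set.Icc 0 (dist (z M) (z N))).Nonempty :=
        (geod_image_nonempty hγ₁).mono subset_union_left
      have hwd : infDist w (γ₁ '' Set.Icc 0 (dist (z 0) (z M)) ∪
          γ₂ '' Set.Icc 0 (dist (z M) (z N))) ≤ δ := (mem_cth_iff hne hδ).1 hwm
      have hkey : ∀ y ∈ γ₁ '' Set.Icc 0 (dist (z 0) (z M)) ∪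
          γ₂ '' Set.Icc 0 (dist (z M) (z N)), infDist y (Set.range z) ≤ c + n * δ := by
        intro y hy
        rcases hy with hy | hy
        · exact ih c hc z M le_rfl (fun i hi => hgap i (lt_of_lt_of_le hi hMN)) γ₁ hγ₁ y hy
        · -- shifted chain
          set z' : ℕ → X := fun i => z (M + i) with hz'
          have hMN' : M + (N - M) = N := by omega
          have h0 : z' 0 = z M := by simp [hz']
          have hNend : z' (N - M) = z N := by simp [hz', hMN']
          have hγ₂' : IsGeodesicSegment (z' 0) (z' (N - M)) γ₂ := by
            rw [h0, hNend]; exact hγ₂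
          have hsub : Set.range z' ⊆ Set.range z := by
            rintro _ ⟨i, rfl⟩; exact ⟨M + i, rfl⟩
          have hy' : y ∈ γ₂ '' Set.Icc 0 (dist (z' 0) (z' (N - M))) := by
            rw [h0, hNend]; exact hy
          have := ih c hc z' (N - M) (by omega) (fun i hi => by
            have : M + i < N := by omega
            have := hgap (M + i) this
            simpa [hz', Nat.add_assoc] using this) γ₂ hγ₂' y hy'
          calc infDist y (Set.range z) ≤ infDist y (Set.range z') :=
                infDist_le_infDist_of_subset hsub ⟨z' 0, 0, rfl⟩
            _ ≤ c + n * δ := this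
      have := infDist_chain hne hwd hkey
      push_cast
      linarith

lemma geod_near_qg (hgeo : GeodesicSpace X) (δ : ℝ) (hδ : 0 ≤ δ)
    (hslim : SlimTriangles (X := X) δ) {k a b : ℝ} (hk : 1 ≤ k) {p : ℝ → X}
    (hp : IsQuasigeodesic k a b p) {u v : ℝ} (hu : u ∈ Set.Icc a b) (hv : v ∈ Set.Icc a b)
    (huv : u ≤ v) {η : ℝ → X} (hη : IsGeodesicSegment (p u) (p v) η) :
    ∀ w ∈ η '' Set.Icc 0 (dist (p u) (p v)),
      infDist w (p '' Set.Icc a b) ≤ 2 * k + (Nat.clog 2 ⌈v - u⌉₊) * δ := by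
  intro w hw
  have hk0 : 0 < k := by linarith
  set N := ⌈v - u⌉₊ with hN
  set z : ℕ → X := fun i => p (min (u + (i : ℝ)) v) with hz
  have hmem : ∀ j : ℕ, min (u + (j : ℝ)) v ∈ Set.Icc a b := by
    intro j
    constructor
    · exact le_min (by linarith [hu.1, Nat.cast_nonneg (α := ℝ) j]) hv.1
    · exact le_trans (min_le_right _ _) hv.2
  have hz0 : z 0 = p u := by
    simp only [hz, Nat.cast_zero, add_zero]
    rw [min_eq_left huv]
  have hzN : z N = p v := by
    simp only [hz]
    rw [min_eq_right]
    linarith [Nat.le_ceil (v - u)]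
  have hgap : ∀ i, i < N → dist (z i) (z (i + 1)) ≤ 2 * k := by
    intro i _
    have h1 := (hp _ (hmem i) _ (hmem (i + 1))).2
    have habs : |min (u + (i:ℝ)) v - min (u + ((i:ℕ) + 1 : ℕ) : ℝ) v| ≤ 1 := by
      push_cast
      rw [abs_le]
      constructor
      · have : min (u + ((i:ℝ) + 1)) v ≤ min (u + (i:ℝ)) v + 1 := by
          rcases min_cases (u + ((i:ℝ) + 1)) v with ⟨h, _⟩ | ⟨h, _⟩
          · rw [h]; simp only [min_def]; split <;> linarith
          · rw [h]; simp only [min_def]; split <;> linarith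
        linarith
      · have h2 : min (u + (i:ℝ)) v ≤ min (u + ((i:ℝ) + 1)) v :=
          min_le_min (by linarith) le_rfl
        linarith
    calc dist (z i) (z (i + 1)) ≤ k * |min (u + (i:ℝ)) v - min (u + ((i + 1 : ℕ) : ℝ)) v| + k :=
          h1
      _ ≤ k * 1 + k := by
          push_cast at habs ⊢
          nlinarith [abs_nonneg (min (u + (i:ℝ)) v - min (u + ((i:ℝ) + 1)) v)]
      _ = 2 * k := by ring
  have hη' : IsGeodesicSegment (z 0) (z N) η := by rw [hz0, hzN]; exact hη
  have hw' : w ∈ η '' Set.Icc 0 (dist (z 0) (z N)) := by rw [hz0, hzN]; exact hw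
  have hchain := chain_lemma hgeo δ hδ hslim (Nat.clog 2 N) (2 * k) (by linarith) z N
    (Nat.le_pow_clog (by norm_num) N) hgap η hη' w hw'
  have hsub : Set.range z ⊆ p '' Set.Icc a b := by
    rintro _ ⟨i, rfl⟩
    exact ⟨_, hmem i, rfl⟩
  calc infDist w (p '' Set.Icc a b) ≤ infDist w (Set.range z) :=
        infDist_le_infDist_of_subset hsub ⟨z 0, 0, rfl⟩
    _ ≤ 2 * k + (Nat.clog 2 N) * δ := hchain

lemma geod_near_qg' (hgeo : GeodesicSpace X) (δ : ℝ) (hδ : 0 ≤ δ)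
    (hslim : SlimTriangles (X := X) δ) {k a b : ℝ} (hk : 1 ≤ k) {p : ℝ → X}
    (hp : IsQuasigeodesic k a b p) {s₁ s₂ : ℝ} (h1 : s₁ ∈ Set.Icc a b) (h2 : s₂ ∈ Set.Icc a b)
    {η : ℝ → X} (hη : IsGeodesicSegment (p s₁) (p s₂) η) :
    ∀ w ∈ η '' Set.Icc 0 (dist (p s₁) (p s₂)),
      infDist w (p '' Set.Icc a b) ≤ 2 * k + (Nat.clog 2 ⌈|s₁ - s₂|⌉₊) * δ := by
  intro w hw
  rcases le_total s₁ s₂ with h | h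
  · have : |s₁ - s₂| = s₂ - s₁ := by rw [abs_sub_comm, abs_of_nonneg (by linarith)]
    rw [this]
    exact geod_near_qg hgeo δ hδ hslim hk hp h1 h2 h hη w hw
  · obtain ⟨hηr, him⟩ := geod_reverse hη
    have : |s₁ - s₂| = s₁ - s₂ := abs_of_nonneg (by linarith)
    rw [this]
    refine geod_near_qg hgeo δ hδ hslim hk hp h2 h1 h hηr w ?_
    rw [him]
    exact hw

lemma poly_absorb {k δ D : ℝ} (hk : 1 ≤ k) (hδ : 0 ≤ δ) (hD : 0 ≤ D) :
    2 * δ * (k * (6 * D + 2 + k) + 2) ≤ (D / 2 + (2 * k + k ^ 2 + 2)) * (24 * k * (δ + 1)) := by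
  nlinarith [mul_nonneg hD (by linarith : (0:ℝ) ≤ k), mul_nonneg hδ (by linarith : (0:ℝ) ≤ k),
    mul_nonneg (mul_nonneg hδ (by linarith : (0:ℝ) ≤ k)) (by linarith : (0:ℝ) ≤ k),
    mul_nonneg hδ (by linarith : (0:ℝ) ≤ k - 1),
    mul_nonneg (mul_nonneg hD (by linarith : (0:ℝ) ≤ k)) hδ]
lemma poly_final {k δ : ℝ} (hk : 1 ≤ k) (hδ : 0 ≤ δ) :
    10 * δ + 8 * k + 2 * k ^ 2 + 6 + 4 * δ * (24 * k * (δ + 1)) ≤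
      100 * (k + 1) ^ 2 * (δ + 1) ^ 2 := by
  nlinarith [mul_nonneg hδ (by linarith : (0:ℝ) ≤ k), sq_nonneg (k - 1), sq_nonneg (δ - 1),
    mul_nonneg (mul_nonneg hδ hδ) (by linarith : (0:ℝ) ≤ k),
    mul_nonneg (mul_nonneg hδ hδ) (by nlinarith : (0:ℝ) ≤ k ^ 2),
    mul_nonneg (mul_nonneg hδ (by linarith : (0:ℝ) ≤ k)) (by linarith : (0:ℝ) ≤ k)]

lemma geod_continuousOn {x y : X} {γ : ℝ → X} (h : IsGeodesicSegment x y γ) :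
    ContinuousOn γ (Set.Icc 0 (dist x y)) := by
  refine (LipschitzOnWith.of_dist_le_mul (K := 1) fun s hs t ht => ?_).continuousOn
  rw [h.2.2 s hs t ht]
  simp [Real.dist_eq]

/-- The bootstrap: a geodesic between endpoints of a quasigeodesic lies within a
uniformly bounded distance of the quasigeodesic. -/
lemma geod_near_qg_bdd (hgeo : GeodesicSpace X) (δ : ℝ) (hδ : 0 ≤ δ)
    (hslim : SlimTriangles (X := X) δ) {k a b : ℝ} (hk : 1 ≤ k) (hab : a ≤ b) {p : ℝ → X}
    (hp : IsQuasigeodesic k a b p) {γ : ℝ → X} (hγ : IsGeodesicSegment (p a) (p b) γ) :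
    ∀ w ∈ γ '' Set.Icc 0 (dist (p a) (p b)),
      infDist w (p '' Set.Icc a b) ≤ 100 * (k + 1) ^ 2 * (δ + 1) ^ 2 := by
  have hk0 : (0:ℝ) < k := by linarith
  set L := dist (p a) (p b) with hL
  set S := p '' Set.Icc a b with hS
  have hSne : S.Nonempty := ⟨p a, a, ⟨le_refl a, hab⟩, rfl⟩
  have hL0 : 0 ≤ L := dist_nonneg
  -- maximum of infDist to S along the geodesic
  obtain ⟨t₀, ht₀mem, ht₀max⟩ := IsCompact.exists_isMaxOn (isCompact_Icc (a := (0:ℝ)) (b := L))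
    ⟨0, le_refl 0, hL0⟩ ((continuous_infDist_pt S).comp_continuousOn (geod_continuousOn hγ))
  set x₀ := γ t₀ with hx₀
  set D := infDist x₀ S with hD
  have hD0 : 0 ≤ D := infDist_nonneg
  have hmax : ∀ t ∈ Set.Icc 0 L, infDist (γ t) S ≤ D := fun t ht => ht₀max ht
  -- it suffices to bound D
  suffices hDb : D ≤ 100 * (k + 1) ^ 2 * (δ + 1) ^ 2 by
    rintro w ⟨t, ht, rfl⟩
    exact le_trans (hmax t ht) hDb
  -- set up the points
  set u := max 0 (t₀ - 2 * D) with hu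
  set v := min L (t₀ + 2 * D) with hv
  have hut₀ : u ≤ t₀ := max_le ht₀mem.1 (by linarith)
  have ht₀v : t₀ ≤ v := le_min ht₀mem.2 (by linarith)
  have hu0 : 0 ≤ u := le_max_left _ _
  have hvL : v ≤ L := min_le_left _ _
  have huv4 : v - u ≤ 4 * D := by
    have h1 : t₀ - 2 * D ≤ u := le_max_right _ _
    have h2 : v ≤ t₀ + 2 * D := min_le_right _ _
    linarith
  set y₁ := γ u with hy₁def
  set y₂ := γ v with hy₂def
  -- distance from x₀ to y₁ and y₂ is at least D
  have hdx₀y₁ : D ≤ dist x₀ y₁ := by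
    rcases max_cases 0 (t₀ - 2 * D) with ⟨h1, h2⟩ | ⟨h1, h2⟩
    · -- u = 0, y₁ = p a ∈ S
      have : y₁ = p a := by rw [hy₁def, hu, h1, hγ.1]
      rw [this]
      exact infDist_le_dist_of_mem ⟨a, ⟨le_refl a, hab⟩, rfl⟩
    · have : dist x₀ y₁ = |t₀ - u| :=
        hγ.2.2 t₀ ht₀mem u ⟨hu0, le_trans hut₀ ht₀mem.2⟩
      rw [this, hu, h1, abs_of_nonneg (by linarith)]
      linarith
  have hdx₀y₂ : D ≤ dist x₀ y₂ := by
    rcases min_cases L (t₀ + 2 * D) with ⟨h1, h2⟩ | ⟨h1, h2⟩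
    · have : y₂ = p b := by rw [hy₂def, hv, h1, hγ.2.1]
      rw [this]
      exact infDist_le_dist_of_mem ⟨b, ⟨hab, le_refl b⟩, rfl⟩
    · have : dist x₀ y₂ = |t₀ - v| :=
        hγ.2.2 t₀ ht₀mem v ⟨le_trans ht₀mem.1 ht₀v, hvL⟩
      rw [this, hv, h1, abs_of_nonpos (by linarith)]
      linarith
  -- choose near points on the quasigeodesic
  have hy₁close : infDist y₁ S < D + 1 :=
    lt_of_le_of_lt (hmax u ⟨hu0, le_trans hut₀ ht₀mem.2⟩) (by linarith)
  have hy₂close : infDist y₂ S < D + 1 :=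
    lt_of_le_of_lt (hmax v ⟨le_trans ht₀mem.1 ht₀v, hvL⟩) (by linarith)
  obtain ⟨q₁, hq₁S, hq₁⟩ := (infDist_lt_iff hSne).1 hy₁close
  obtain ⟨q₂, hq₂S, hq₂⟩ := (infDist_lt_iff hSne).1 hy₂close
  obtain ⟨s₁, hs₁mem, hs₁⟩ := hq₁S
  obtain ⟨s₂, hs₂mem, hs₂⟩ := hq₂S
  rw [← hs₁] at hq₁
  rw [← hs₂] at hq₂
  -- geodesics
  obtain ⟨η, hη⟩ := hgeo (p s₁) (p s₂)
  obtain ⟨σ₁, hσ₁⟩ := hgeo y₁ (p s₁)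
  obtain ⟨σ₂, hσ₂⟩ := hgeo (p s₂) y₂
  obtain ⟨η₂, hη₂⟩ := hgeo y₁ (p s₂)
  obtain ⟨hγ', hγ'im⟩ := geod_sub hγ hu0 (le_trans hut₀ ht₀v) hvL
  -- x₀ lies on the subgeodesic from y₁ to y₂
  have hx₀mem : x₀ ∈ (fun t => γ (u + t)) '' Set.Icc 0 (dist y₁ y₂) := by
    rw [hγ'im]
    exact ⟨t₀, ⟨hut₀, ht₀v⟩, rfl⟩
  -- the two slim triangles
  have hT1 := (hslim y₁ (p s₂) y₂ η₂ σ₂ (fun t => γ (u + t)) hη₂ hσ₂ hγ').2.2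
  have hT2 := (hslim y₁ (p s₁) (p s₂) σ₁ η η₂ hσ₁ hη hη₂).2.2
  set A : ℝ := 2 * k + (Nat.clog 2 ⌈|s₁ - s₂|⌉₊) * δ with hA
  have hA0 : 0 ≤ A := by positivity
  -- Lemma A': points of η are within A of S
  have hηA : ∀ y ∈ η '' Set.Icc 0 (dist (p s₁) (p s₂)), infDist y S ≤ A :=
    geod_near_qg' hgeo δ hδ hslim hk hp hs₁mem hs₂mem hη
  -- points of σ₁ are at distance ≥ (D-1)/2 from x₀
  have hσ₁far : ∀ y ∈ σ₁ '' Set.Icc 0 (dist y₁ (p s₁)), (D - 1) / 2 ≤ dist x₀ y := by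
    intro y hy
    obtain ⟨c1, c2, c3⟩ := geod_pt_close hσ₁ hy
    have h1 : D ≤ dist x₀ (p s₁) := infDist_le_dist_of_mem ⟨s₁, hs₁mem, rfl⟩
    have h2 : dist x₀ y₁ ≤ dist x₀ y + dist y y₁ := dist_triangle _ _ _
    have h3 : dist x₀ (p s₁) ≤ dist x₀ y + dist y (p s₁) := dist_triangle _ _ _
    have h4 : dist y₁ (p s₁) < D + 1 := hq₁
    linarith [hdx₀y₁]
  -- points of σ₂ are at distance ≥ (D-1)/2 from x₀
  have hσ₂far : ∀ y ∈ σ₂ '' Set.Icc 0 (dist (p s₂) y₂), (D - 1) / 2 ≤ dist x₀ y := by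
    intro y hy
    obtain ⟨c1, c2, c3⟩ := geod_pt_close hσ₂ hy
    have h1 : D ≤ dist x₀ (p s₂) := infDist_le_dist_of_mem ⟨s₂, hs₂mem, rfl⟩
    have h2 : dist x₀ y₂ ≤ dist x₀ y + dist y y₂ := dist_triangle _ _ _
    have h3 : dist x₀ (p s₂) ≤ dist x₀ y + dist y (p s₂) := dist_triangle _ _ _
    have h4 : dist (p s₂) y₂ < D + 1 := by rw [dist_comm]; exact hq₂
    linarith [hdx₀y₂]
  -- main estimate: D ≤ 4δ + A + 1
  have hmain : D ≤ 4 * δ + A + 1 := by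
    refine le_of_forall_pos_le_add fun ε hε => ?_
    have hne1 : (η₂ '' Set.Icc 0 (dist y₁ (p s₂)) ∪ σ₂ '' Set.Icc 0 (dist (p s₂) y₂)).Nonempty :=
      (geod_image_nonempty hη₂).mono subset_union_left
    have hx₀d : infDist x₀ (η₂ '' Set.Icc 0 (dist y₁ (p s₂)) ∪
        σ₂ '' Set.Icc 0 (dist (p s₂) y₂)) ≤ δ := (mem_cth_iff hne1 hδ).1 (hT1 hx₀mem)
    obtain ⟨y, hy, hxy⟩ := (infDist_lt_iff hne1).1
      (lt_of_le_of_lt hx₀d (by linarith : δ < δ + ε / 4))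
    rcases hy with hy | hy
    · -- y on η₂ : go one more level
      have hne2 : (σ₁ '' Set.Icc 0 (dist y₁ (p s₁)) ∪
          η '' Set.Icc 0 (dist (p s₁) (p s₂))).Nonempty :=
        (geod_image_nonempty hσ₁).mono subset_union_left
      have hyd : infDist y (σ₁ '' Set.Icc 0 (dist y₁ (p s₁)) ∪
          η '' Set.Icc 0 (dist (p s₁) (p s₂))) ≤ δ := (mem_cth_iff hne2 hδ).1 (hT2 hy)
      obtain ⟨y', hy', hyy'⟩ := (infDist_lt_iff hne2).1
        (lt_of_le_of_lt hyd (by linarith : δ < δ + ε / 4))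
      have hxy' : dist x₀ y' ≤ 2 * δ + ε / 2 :=
        le_trans (dist_triangle x₀ y y') (by linarith [hxy.le, hyy'.le])
      rcases hy' with hy' | hy'
      · -- y' on σ₁ : D is small
        have := hσ₁far y' hy'
        linarith
      · -- y' on η : conclude via A
        have h5 : infDist y' S ≤ A := hηA y' hy'
        have h6 : infDist x₀ S ≤ infDist y' S + dist x₀ y' := infDist_le_infDist_add_dist
        rw [← hD] at h6
        linarith
    · -- y on σ₂ : D is small
      have := hσ₂far y hy
      linarith [hxy.le]
  -- bound |s₁ - s₂|
  have hdy₁y₂ : dist y₁ y₂ ≤ 4 * D := by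
    have : dist y₁ y₂ = |u - v| :=
      hγ.2.2 u ⟨hu0, le_trans hut₀ ht₀mem.2⟩ v ⟨le_trans ht₀mem.1 ht₀v, hvL⟩
    rw [this, abs_of_nonpos (by linarith [hut₀, ht₀v])]
    linarith
  have hds : dist (p s₁) (p s₂) ≤ 6 * D + 2 := by
    have h1 : dist (p s₁) (p s₂) ≤ dist (p s₁) y₁ + dist y₁ y₂ + dist y₂ (p s₂) :=
      dist_triangle4 _ _ _ _
    rw [dist_comm (p s₁) y₁] at h1
    rw [dist_comm y₂ (p s₂)] at h1
    have h2 : dist y₂ (p s₂) < D + 1 := hq₂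
    rw [dist_comm y₂ (p s₂)] at h2
    linarith [hq₁.le, h2.le]
  have hs₁s₂ : |s₁ - s₂| ≤ k * (6 * D + 2 + k) := by
    have := (hp s₁ hs₁mem s₂ hs₂mem).1
    have h2 : (1 / k) * |s₁ - s₂| ≤ 6 * D + 2 + k := by linarith
    calc |s₁ - s₂| = k * ((1 / k) * |s₁ - s₂|) := by field_simp
      _ ≤ k * (6 * D + 2 + k) := by
          apply mul_le_mul_of_nonneg_left h2 (by linarith)
  -- bound the clog term
  set T : ℝ := k * (6 * D + 2 + k) with hT
  have hT0 : 0 ≤ T := by positivity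
  have hmT : ((Nat.clog 2 ⌈|s₁ - s₂|⌉₊ : ℕ) : ℝ) ≤ Real.logb 2 (T + 2) + 1 := by
    have h1 : Nat.clog 2 ⌈|s₁ - s₂|⌉₊ ≤ Nat.clog 2 ⌈T⌉₊ :=
      Nat.clog_mono_right 2 (Nat.ceil_mono hs₁s₂)
    have h2 := clog_le_logb ⌈T⌉₊
    have h3 : ((⌈T⌉₊ : ℝ) + 1) ≤ T + 2 := by
      have := Nat.ceil_lt_add_one hT0
      linarith
    have h4 : Real.logb 2 ((⌈T⌉₊ : ℝ) + 1) ≤ Real.logb 2 (T + 2) :=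
      Real.logb_le_logb_of_le (by norm_num) (by positivity) h3
    calc ((Nat.clog 2 ⌈|s₁ - s₂|⌉₊ : ℕ) : ℝ) ≤ ((Nat.clog 2 ⌈T⌉₊ : ℕ) : ℝ) := by exact_mod_cast h1
      _ ≤ Real.logb 2 ((⌈T⌉₊ : ℝ) + 1) + 1 := h2
      _ ≤ Real.logb 2 (T + 2) + 1 := by linarith
  -- the logarithm grind
  set c : ℝ := 24 * k * (δ + 1) with hc
  have hc0 : (0:ℝ) < c := by positivity
  have hT2pos : (0:ℝ) < T + 2 := by linarith
  have hlogb : Real.logb 2 (T + 2) ≤ 2 * Real.log (T + 2) := by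
    have h1 : 0 ≤ Real.log (T + 2) := Real.log_nonneg (by linarith)
    have h2 := Real.log_two_gt_d9
    rw [Real.logb, div_le_iff₀ (by linarith : (0:ℝ) < Real.log 2)]
    nlinarith
  have hlog : Real.log (T + 2) ≤ c + (T + 2) / c := by
    have h1 : Real.log ((T + 2) / c) ≤ (T + 2) / c - 1 :=
      Real.log_le_sub_one_of_pos (by positivity)
    have h2 : Real.log c ≤ c - 1 := Real.log_le_sub_one_of_pos hc0
    have h3 : Real.log (T + 2) = Real.log c + Real.log ((T + 2) / c) := by
      rw [← Real.log_mul (ne_of_gt hc0) (by positivity)]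
      congr 1
      field_simp
    linarith
  have hTval : T = k * (6 * D + 2 + k) := hT
  have hcval : c = 24 * k * (δ + 1) := hc
  clear_value T c D
  have habsorb : δ * (2 * ((T + 2) / c)) ≤ D / 2 + (2 * k + k ^ 2 + 2) := by
    have he : δ * (2 * ((T + 2) / c)) = (2 * δ * (T + 2)) / c := by ring
    rw [he, div_le_iff₀ hc0, hTval, hcval]
    exact poly_absorb hk hδ hD0
  -- assemble
  have hmd : ((Nat.clog 2 ⌈|s₁ - s₂|⌉₊ : ℕ) : ℝ) * δ ≤ (Real.logb 2 (T + 2) + 1) * δ :=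
    mul_le_mul_of_nonneg_right hmT hδ
  have h7 : δ * Real.logb 2 (T + 2) ≤ δ * (2 * Real.log (T + 2)) :=
    mul_le_mul_of_nonneg_left hlogb hδ
  have h8 : δ * (2 * Real.log (T + 2)) ≤ δ * (2 * (c + (T + 2) / c)) :=
    mul_le_mul_of_nonneg_left (by linarith) hδ
  have h9 : δ * (2 * (c + (T + 2) / c)) = 2 * δ * c + δ * (2 * ((T + 2) / c)) := by ring
  have hfin : D ≤ 10 * δ + 8 * k + 2 * k ^ 2 + 6 + 4 * δ * c := by
    rw [hA] at hmain
    have : (Real.logb 2 (T + 2) + 1) * δ = δ * Real.logb 2 (T + 2) + δ := by ring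
    rw [this] at hmd
    linarith
  rw [hcval] at hfin
  linarith [poly_final hk hδ]

/-- The quasigeodesic stays near the geodesic joining its endpoints. -/
lemma qg_near_geod (hgeo : GeodesicSpace X) (δ : ℝ) (hδ : 0 ≤ δ)
    (hslim : SlimTriangles (X := X) δ) {k a b : ℝ} (hk : 1 ≤ k) (hab : a ≤ b) {p : ℝ → X}
    (hp : IsQuasigeodesic k a b p) {γ : ℝ → X} (hγ : IsGeodesicSegment (p a) (p b) γ) :
    ∀ t ∈ Set.Icc a b, infDist (p t) (γ '' Set.Icc 0 (dist (p a) (p b))) ≤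
      k ^ 2 * (2 * (100 * (k + 1) ^ 2 * (δ + 1) ^ 2) + 3 + k) + k +
        100 * (k + 1) ^ 2 * (δ + 1) ^ 2 + 1 := by
  intro t ht
  have hk0 : (0:ℝ) < k := by linarith
  set C₀ : ℝ := 100 * (k + 1) ^ 2 * (δ + 1) ^ 2 with hC₀
  have hC₀0 : 0 ≤ C₀ := by positivity
  set L := dist (p a) (p b) with hL
  have hL0 : 0 ≤ L := dist_nonneg
  have hB := geod_near_qg_bdd hgeo δ hδ hslim hk hab hp hγ
  set S₁ : Set ℝ := {s | s ∈ Set.Icc 0 L ∧ ∃ r ∈ Set.Icc a t, dist (γ s) (p r) ≤ C₀ + 1}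
    with hS₁
  set S₂ : Set ℝ := {s | s ∈ Set.Icc 0 L ∧ ∃ r ∈ Set.Icc t b, dist (γ s) (p r) ≤ C₀ + 1}
    with hS₂
  have hcover : ∀ s ∈ Set.Icc (0:ℝ) L, s ∈ S₁ ∪ S₂ := by
    intro s hs
    have h1 : infDist (γ s) (p '' Set.Icc a b) ≤ C₀ := hB (γ s) ⟨s, hs, rfl⟩
    have hlt : infDist (γ s) (p '' Set.Icc a b) < C₀ + 1 := lt_of_le_of_lt h1 (by linarith)
    have hne : (p '' Set.Icc a b).Nonempty := ⟨p a, a, ⟨le_refl a, hab⟩, rfl⟩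
    obtain ⟨y, ⟨r, hr, rfl⟩, hy⟩ := (infDist_lt_iff hne).1 hlt
    rcases le_total r t with h | h
    · exact Or.inl ⟨hs, r, ⟨hr.1, h⟩, hy.le⟩
    · exact Or.inr ⟨hs, r, ⟨h, hr.2⟩, hy.le⟩
  have h0S₁ : (0:ℝ) ∈ S₁ := by
    refine ⟨⟨le_refl 0, hL0⟩, a, ⟨le_refl a, ht.1⟩, ?_⟩
    rw [hγ.1]
    simp
    linarith
  have hS₁ne : S₁.Nonempty := ⟨0, h0S₁⟩
  have hS₁bdd : BddAbove S₁ := ⟨L, fun s hs => hs.1.2⟩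
  set sstar := sSup S₁ with hsstar
  have hsstar0 : 0 ≤ sstar := le_csSup hS₁bdd h0S₁
  have hsstarL : sstar ≤ L := csSup_le hS₁ne fun s hs => hs.1.2
  obtain ⟨s₁, hs₁S, hs₁lt⟩ := exists_lt_of_lt_csSup hS₁ne (by linarith : sstar - 1/2 < sstar)
  have hs₁le : s₁ ≤ sstar := le_csSup hS₁bdd hs₁S
  set s₂ := min (sstar + 1/2) L with hs₂def
  have hs₂mem : s₂ ∈ Set.Icc (0:ℝ) L := ⟨le_min (by linarith) hL0, min_le_right _ _⟩
  have hs₂ge : sstar ≤ s₂ ∨ s₂ = L := by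
    rcases min_cases (sstar + 1/2) L with ⟨h1, h2⟩ | ⟨h1, h2⟩
    · left; rw [hs₂def, h1]; linarith
    · right; rw [hs₂def, h1]
  have hs₂S₂ : s₂ ∈ S₂ := by
    rcases min_cases (sstar + 1/2) L with ⟨h1, h2⟩ | ⟨h1, h2⟩
    · have hgt : sstar < s₂ := by rw [hs₂def, h1]; linarith
      rcases hcover s₂ hs₂mem with h | h
      · exact absurd (le_csSup hS₁bdd h) (not_le.2 hgt)
      · exact h
    · have : s₂ = L := by rw [hs₂def, h1]
      rw [this]
      refine ⟨⟨hL0, le_refl L⟩, b, ⟨ht.2, le_refl b⟩, ?_⟩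
      rw [hγ.2.1]
      simp
      linarith
  have hs₂ges : s₁ ≤ s₂ := by
    rcases hs₂ge with h | h
    · linarith
    · rw [h]; exact hs₁S.1.2
  have hs₁s₂ : |s₁ - s₂| ≤ 1 := by
    have h1 : s₂ ≤ sstar + 1/2 := min_le_left _ _
    rw [abs_sub_comm, abs_of_nonneg (by linarith)]
    linarith
  obtain ⟨r₁, hr₁, hd₁⟩ := hs₁S.2
  obtain ⟨r₂, hr₂, hd₂⟩ := hs₂S₂.2
  have hr₁b : r₁ ∈ Set.Icc a b := ⟨hr₁.1, le_trans hr₁.2 ht.2⟩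
  have hr₂b : r₂ ∈ Set.Icc a b := ⟨le_trans ht.1 hr₂.1, hr₂.2⟩
  have hγs : dist (γ s₁) (γ s₂) ≤ 1 := by
    rw [hγ.2.2 s₁ hs₁S.1 s₂ hs₂mem]
    exact hs₁s₂
  have hpr : dist (p r₁) (p r₂) ≤ 2 * C₀ + 3 := by
    have h1 : dist (p r₁) (p r₂) ≤ dist (p r₁) (γ s₁) + dist (γ s₁) (γ s₂) +
        dist (γ s₂) (p r₂) := dist_triangle4 _ _ _ _
    rw [dist_comm (p r₁) (γ s₁)] at h1
    linarith
  have hr₁r₂ : |r₁ - r₂| ≤ k * (2 * C₀ + 3 + k) := by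
    have := (hp r₁ hr₁b r₂ hr₂b).1
    have h2 : (1 / k) * |r₁ - r₂| ≤ 2 * C₀ + 3 + k := by linarith
    calc |r₁ - r₂| = k * ((1 / k) * |r₁ - r₂|) := by field_simp
      _ ≤ k * (2 * C₀ + 3 + k) := mul_le_mul_of_nonneg_left h2 (by linarith)
  have htr₁ : |t - r₁| ≤ k * (2 * C₀ + 3 + k) := by
    have h1 : r₁ ≤ t := hr₁.2
    have h2 : t ≤ r₂ := hr₂.1
    rw [abs_of_nonneg (by linarith)]
    rw [abs_of_nonpos (by linarith)] at hr₁r₂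
    linarith
  have hpt : dist (p t) (p r₁) ≤ k * (k * (2 * C₀ + 3 + k)) + k := by
    have := (hp t ht r₁ hr₁b).2
    have h2 : k * |t - r₁| ≤ k * (k * (2 * C₀ + 3 + k)) :=
      mul_le_mul_of_nonneg_left htr₁ (by linarith)
    linarith
  have hfin : dist (p t) (γ s₁) ≤ k ^ 2 * (2 * C₀ + 3 + k) + k + C₀ + 1 := by
    have h1 : dist (p t) (γ s₁) ≤ dist (p t) (p r₁) + dist (p r₁) (γ s₁) := dist_triangle _ _ _
    rw [dist_comm (p r₁) (γ s₁)] at h1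
    nlinarith
  calc infDist (p t) (γ '' Set.Icc 0 L) ≤ dist (p t) (γ s₁) :=
        infDist_le_dist_of_mem ⟨s₁, hs₁S.1, rfl⟩
    _ ≤ k ^ 2 * (2 * C₀ + 3 + k) + k + C₀ + 1 := hfin

/-- Two geodesics with endpoints at distance at most `R` are uniformly close. -/
lemma geod_close_geod (hgeo : GeodesicSpace X) (δ : ℝ) (hδ : 0 ≤ δ)
    (hslim : SlimTriangles (X := X) δ) {x₁ x₂ y₁ y₂ : X} {γ₁ γ₂ : ℝ → X}
    (hγ₁ : IsGeodesicSegment x₁ x₂ γ₁) (hγ₂ : IsGeodesicSegment y₁ y₂ γ₂) {R : ℝ}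
    (hR0 : 0 ≤ R) (hR1 : dist x₁ y₁ ≤ R) (hR2 : dist x₂ y₂ ≤ R) :
    ∀ w ∈ γ₁ '' Set.Icc 0 (dist x₁ x₂),
      infDist w (γ₂ '' Set.Icc 0 (dist y₁ y₂)) ≤ 2 * δ + R := by
  intro w hw
  obtain ⟨τ, hτ⟩ := hgeo x₂ y₂
  obtain ⟨η, hη⟩ := hgeo x₁ y₂
  obtain ⟨ρ, hρ⟩ := hgeo x₁ y₁
  have hT1 := (hslim x₁ x₂ y₂ γ₁ τ η hγ₁ hτ hη).1
  have hT2 := (hslim x₁ y₁ y₂ ρ γ₂ η hρ hγ₂ hη).2.2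
  have hγ₂ne := geod_image_nonempty hγ₂
  have hτpt : ∀ y ∈ τ '' Set.Icc 0 (dist x₂ y₂),
      infDist y (γ₂ '' Set.Icc 0 (dist y₁ y₂)) ≤ R := by
    intro y hy
    have := (geod_pt_close hτ hy).2.1
    calc infDist y (γ₂ '' Set.Icc 0 (dist y₁ y₂)) ≤ dist y y₂ :=
          infDist_le_dist_of_mem (geod_mem_right hγ₂)
      _ ≤ R := by linarith
  have hρpt : ∀ y ∈ ρ '' Set.Icc 0 (dist x₁ y₁),
      infDist y (γ₂ '' Set.Icc 0 (dist y₁ y₂)) ≤ R := by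
    intro y hy
    have := (geod_pt_close hρ hy).2.1
    calc infDist y (γ₂ '' Set.Icc 0 (dist y₁ y₂)) ≤ dist y y₁ :=
          infDist_le_dist_of_mem (geod_mem_left hγ₂)
      _ ≤ R := by linarith
  have hηpt : ∀ y ∈ η '' Set.Icc 0 (dist x₁ y₂),
      infDist y (γ₂ '' Set.Icc 0 (dist y₁ y₂)) ≤ δ + R := by
    intro y hy
    have hne : (ρ '' Set.Icc 0 (dist x₁ y₁) ∪ γ₂ '' Set.Icc 0 (dist y₁ y₂)).Nonempty :=
      (geod_image_nonempty hρ).mono subset_union_left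
    have h1 : infDist y (ρ '' Set.Icc 0 (dist x₁ y₁) ∪ γ₂ '' Set.Icc 0 (dist y₁ y₂)) ≤ δ :=
      (mem_cth_iff hne hδ).1 (hT2 hy)
    have h2 : ∀ z ∈ ρ '' Set.Icc 0 (dist x₁ y₁) ∪ γ₂ '' Set.Icc 0 (dist y₁ y₂),
        infDist z (γ₂ '' Set.Icc 0 (dist y₁ y₂)) ≤ R := by
      intro z hz
      rcases hz with hz | hz
      · exact hρpt z hz
      · rw [infDist_zero_of_mem hz]; exact hR0
    exact infDist_chain hne h1 h2
  have hne : (τ '' Set.Icc 0 (dist x₂ y₂) ∪ η '' Set.Icc 0 (dist x₁ y₂)).Nonempty :=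
    (geod_image_nonempty hτ).mono subset_union_left
  have h1 : infDist w (τ '' Set.Icc 0 (dist x₂ y₂) ∪ η '' Set.Icc 0 (dist x₁ y₂)) ≤ δ :=
    (mem_cth_iff hne hδ).1 (hT1 hw)
  have h2 : ∀ z ∈ τ '' Set.Icc 0 (dist x₂ y₂) ∪ η '' Set.Icc 0 (dist x₁ y₂),
      infDist z (γ₂ '' Set.Icc 0 (dist y₁ y₂)) ≤ δ + R := by
    intro z hz
    rcases hz with hz | hz
    · linarith [hτpt z hz]
    · exact hηpt z hz
  have := infDist_chain hne h1 h2
  linarith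

lemma poly_dom {k δ : ℝ} (hk : 1 ≤ k) (hδ : 0 ≤ δ) :
    100 * (k + 1) ^ 2 * (δ + 1) ^ 2 +
      (k ^ 2 * (2 * (100 * (k + 1) ^ 2 * (δ + 1) ^ 2) + 3 + k) + k +
        100 * (k + 1) ^ 2 * (δ + 1) ^ 2 + 1) ≤ 300 * (δ + 1) ^ 2 * (k + 1) ^ 5 + 4 := by
  have h1 : (0:ℝ) ≤ (δ + 1) ^ 2 := by positivity
  have h2 : (0:ℝ) ≤ (k + 1) ^ 2 := by positivity
  have e1 : (1:ℝ) + k ^ 2 ≤ (k + 1) ^ 2 := by nlinarith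
  have e4 : (k + 1) ^ 4 ≤ (k + 1) ^ 5 := by
    apply pow_le_pow_right₀ (by linarith) (by norm_num)
  have e2 : 200 * (k + 1) ^ 2 * (δ + 1) ^ 2 * (1 + k ^ 2) ≤ 200 * (δ + 1) ^ 2 * (k + 1) ^ 5 := by
    have : 200 * (k + 1) ^ 2 * (δ + 1) ^ 2 * (1 + k ^ 2) ≤
        200 * (k + 1) ^ 2 * (δ + 1) ^ 2 * (k + 1) ^ 2 := by
      apply mul_le_mul_of_nonneg_left e1 (by positivity)
    have h5 : 200 * (k + 1) ^ 2 * (δ + 1) ^ 2 * (k + 1) ^ 2 = 200 * (δ + 1) ^ 2 * (k+1) ^ 4 := by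
      ring
    have h6 : 200 * (δ + 1) ^ 2 * (k + 1) ^ 4 ≤ 200 * (δ + 1) ^ 2 * (k + 1) ^ 5 := by
      apply mul_le_mul_of_nonneg_left e4 (by positivity)
    linarith
  have e3 : k ^ 3 + 3 * k ^ 2 + k + 1 ≤ 100 * (δ + 1) ^ 2 * (k + 1) ^ 5 := by
    have h7 : k ^ 3 + 3 * k ^ 2 + k + 1 ≤ (k + 1) ^ 3 := by nlinarith
    have h8 : (k + 1) ^ 3 ≤ (k + 1) ^ 5 := by
      apply pow_le_pow_right₀ (by linarith) (by norm_num)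
    have h9 : (k + 1) ^ 5 ≤ 100 * (δ + 1) ^ 2 * (k + 1) ^ 5 := by
      have hd1 : (1:ℝ) ≤ 100 * (δ + 1) ^ 2 := by nlinarith
      have := mul_le_mul_of_nonneg_right hd1 (pow_nonneg (by linarith : (0:ℝ) ≤ k + 1) 5)
      nlinarith [this]
    linarith
  nlinarith [e2, e3]

end AuxMorse

/-- **Corollary 2.2.6.** In a `δ`-hyperbolic geodesic space, two `k`-quasigeodesics whose
respective endpoints are within distance `R` of each other lie in closed
`N(k,R)`-neighborhoods of one another, where `N(k,R)` may be chosen bounded by a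
polynomial in `k` and `R`. -/
theorem stmt_7 {X : Type*} [MetricSpace X] (hgeo : GeodesicSpace X)
    (δ : ℝ) (hδ : 0 ≤ δ) (hslim : SlimTriangles (X := X) δ) :
    ∃ N : ℝ → ℝ → ℝ,
      (∃ Q : MvPolynomial (Fin 2) ℝ, ∀ k R : ℝ, 1 ≤ k → 0 ≤ R →
        N k R ≤ MvPolynomial.eval ![k, R] Q) ∧
      ∀ k R : ℝ, 1 ≤ k → 0 ≤ R →
        ∀ a b a' b' : ℝ, a ≤ b → a' ≤ b' →
        ∀ p q : ℝ → X, IsQuasigeodesic k a b p → IsQuasigeodesic k a' b' q →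
          dist (p a) (q a') ≤ R → dist (p b) (q b') ≤ R →
          p '' Set.Icc a b ⊆ Metric.cthickening (N k R) (q '' Set.Icc a' b') ∧
          q '' Set.Icc a' b' ⊆ Metric.cthickening (N k R) (p '' Set.Icc a b) := by
  refine ⟨fun k R => 100 * (k + 1) ^ 2 * (δ + 1) ^ 2 +
      (k ^ 2 * (2 * (100 * (k + 1) ^ 2 * (δ + 1) ^ 2) + 3 + k) + k +
        100 * (k + 1) ^ 2 * (δ + 1) ^ 2 + 1) + 2 * δ + R, ?_, ?_⟩
  · refine ⟨MvPolynomial.C (300 * (δ + 1) ^ 2) * (MvPolynomial.X 0 + 1) ^ 5 +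
      MvPolynomial.C (2 * δ + 4) + MvPolynomial.X 1, ?_⟩
    intro k R hk hR
    have hdom := poly_dom (δ := δ) hk hδ
    simp only [MvPolynomial.eval_add, MvPolynomial.eval_mul, MvPolynomial.eval_pow,
      MvPolynomial.eval_C, MvPolynomial.eval_X,
      Matrix.cons_val_zero, Matrix.cons_val_one, Matrix.head_cons, map_one]
    linarith
  · intro k R hk hR a b a' b' hab ha'b' p q hp hq hRa hRb
    have hk0 : (0:ℝ) < k := by linarith
    set C₀ : ℝ := 100 * (k + 1) ^ 2 * (δ + 1) ^ 2 with hC₀def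
    set C₁ : ℝ := k ^ 2 * (2 * C₀ + 3 + k) + k + C₀ + 1 with hC₁def
    have hC₀0 : 0 ≤ C₀ := by positivity
    have hC₁0 : 0 ≤ C₁ := by
      have h1 : 0 ≤ 2 * C₀ + 3 + k := by linarith
      have := mul_nonneg (sq_nonneg k) h1
      linarith
    have hN0 : 0 ≤ C₀ + C₁ + 2 * δ + R := by linarith
    obtain ⟨γp, hγp⟩ := hgeo (p a) (p b)
    obtain ⟨γq, hγq⟩ := hgeo (q a') (q b')
    have hqne : (q '' Set.Icc a' b').Nonempty := ⟨q a', a', ⟨le_refl _, ha'b'⟩, rfl⟩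
    have hpne : (p '' Set.Icc a b).Nonempty := ⟨p a, a, ⟨le_refl _, hab⟩, rfl⟩
    constructor
    · rintro x ⟨t, ht, rfl⟩
      have h1 : infDist (p t) (γp '' Set.Icc 0 (dist (p a) (p b))) ≤ C₁ :=
        qg_near_geod hgeo δ hδ hslim hk hab hp hγp t ht
      have h2 : ∀ y ∈ γp '' Set.Icc 0 (dist (p a) (p b)),
          infDist y (γq '' Set.Icc 0 (dist (q a') (q b'))) ≤ 2 * δ + R :=
        geod_close_geod hgeo δ hδ hslim hγp hγq (le_trans dist_nonneg hRa) hRa hRb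
      have h3 : ∀ z ∈ γq '' Set.Icc 0 (dist (q a') (q b')),
          infDist z (q '' Set.Icc a' b') ≤ C₀ :=
        geod_near_qg_bdd hgeo δ hδ hslim hk ha'b' hq hγq
      have c1 := infDist_chain (geod_image_nonempty hγp) h1 h2
      have c2 := infDist_chain (geod_image_nonempty hγq) c1 h3
      rw [mem_cth_iff hqne hN0]
      linarith
    · rintro x ⟨t, ht, rfl⟩
      have h1 : infDist (q t) (γq '' Set.Icc 0 (dist (q a') (q b'))) ≤ C₁ :=
        qg_near_geod hgeo δ hδ hslim hk ha'b' hq hγq t ht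
      have h2 : ∀ y ∈ γq '' Set.Icc 0 (dist (q a') (q b')),
          infDist y (γp '' Set.Icc 0 (dist (p a) (p b))) ≤ 2 * δ + R := by
        apply geod_close_geod hgeo δ hδ hslim hγq hγp (le_trans dist_nonneg hRa)
        · rw [dist_comm]; exact hRa
        · rw [dist_comm]; exact hRb
      have h3 : ∀ z ∈ γp '' Set.Icc 0 (dist (p a) (p b)),
          infDist z (p '' Set.Icc a b) ≤ C₀ :=
        geod_near_qg_bdd hgeo δ hδ hslim hk hab hp hγp
      have c1 := infDist_chain (geod_image_nonempty hγq) h1 h2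
      have c2 := infDist_chain (geod_image_nonempty hγp) c1 h3
      rw [mem_cth_iff hpne hN0]
      linarith
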